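/- Let p, q be coprime integers with 0 < p < q. (i) The permutation σ_{q−1} is a single q-cycle: for every s ∈ {1, …, q} the least integer n ≥ 1 with σ_{q−1}^n(s) = s equals q. (ii) For the permutation σ_q (corresponding to a circle enclosing all q branch points, equivalently the branch point at infinity), the least integer n ≥ 1 with σ_q^n(s) = s equals q − p if 1 ≤ s ≤ q − p, and equals p if q − p + 1 ≤ s ≤ q. -/

import Mathlib

/-- a mod~ b : equals a mod b if this is nonzero, and b otherwise. -/
def amod (a b : ℕ) : ℕ := if a % b = 0 then b else a % b

/-- The transposition τ_j of {1,…,q} exchanging j and (j + q - p) mod~ q. -/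
def tau (q p j : ℕ) : Equiv.Perm ℕ := Equiv.swap j (amod (j + q - p) q)

/-- The monodromy permutation σ_b = τ_b ∘ ⋯ ∘ τ_1 (τ_1 applied first, σ_0 = id). -/
def sigma (q p : ℕ) : ℕ → Equiv.Perm ℕ
  | 0 => 1
  | b + 1 => tau q p (b + 1) * sigma q p b

lemma amod_pos (a q : ℕ) (hq : 0 < q) : 1 ≤ amod a q := by
  unfold amod; split <;> omega

lemma amod_le (a q : ℕ) (hq : 0 < q) : amod a q ≤ q := by
  unfold amod; split
  · omega
  · exact le_of_lt (Nat.mod_lt a hq)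

lemma amod_mod (a q : ℕ) : amod a q % q = a % q := by
  unfold amod; split <;> simp_all [Nat.mod_self]

lemma amod_eq_self (a q : ℕ) (h1 : 1 ≤ a) (h2 : a ≤ q) : amod a q = a := by
  unfold amod
  rcases eq_or_lt_of_le h2 with h | h
  · subst h; simp
  · rw [Nat.mod_eq_of_lt h, if_neg (by omega)]

lemma amod_eq_amod_iff (a c q : ℕ) (hq : 0 < q) :
    amod a q = amod c q ↔ a % q = c % q := by
  constructor
  · intro h; rw [← amod_mod a q, ← amod_mod c q, h]
  · intro h; unfold amod; rw [h]

lemma lt_div_succ_mul (a b : ℕ) (hb : 0 < b) : a < (a/b + 1) * b := by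
  have h1 := Nat.div_add_mod a b
  have h2 := Nat.mod_lt a hb
  nlinarith

/-- Window: with k = (b + c - s)/c, s + k*c lies in (b, b+c]. -/
lemma window (b c s : ℕ) (hc : 0 < c) (hs : s ≤ c) (hs1 : 1 ≤ s) :
    b < s + ((b + c - s)/c) * c ∧ s + ((b + c - s)/c) * c ≤ b + c := by
  set k := (b + c - s)/c with hk
  have h1 : k * c ≤ b + c - s := Nat.div_mul_le_self _ _
  have h2 : b + c - s < (k + 1) * c := lt_div_succ_mul _ _ hc
  have h3 : (k + 1) * c = k * c + c := by ring
  omega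

lemma window_unique (b c x y : ℕ) (hc : 0 < c) (hx1 : b < x) (hx2 : x ≤ b + c)
    (hy1 : b < y) (hy2 : y ≤ b + c) (hxy : x % c = y % c) : x = y := by
  rcases le_total x y with h | h
  · have hd : c ∣ y - x := (Nat.modEq_iff_dvd' h).mp hxy
    rcases Nat.eq_zero_or_pos (y - x) with h0 | h0
    · omega
    · have := Nat.le_of_dvd h0 hd; omega
  · have hd : c ∣ x - y := (Nat.modEq_iff_dvd' h).mp hxy.symm
    rcases Nat.eq_zero_or_pos (x - y) with h0 | h0
    · omega
    · have := Nat.le_of_dvd h0 hd; omega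



/-- Closed form for sigma. -/
def Fm (q p b s : ℕ) : ℕ :=
  if s = 0 ∨ q < s then s
  else if s ≤ q - p then amod (s + ((b + (q - p) - s) / (q - p)) * (q - p)) q
  else amod (s + ((b + p - (s - (q - p))) / p) * p) q


lemma Fm_out (q p b s : ℕ) (hs : s = 0 ∨ q < s) : Fm q p b s = s := by
  unfold Fm; rw [if_pos hs]

lemma Fm_b1 (q p b s : ℕ) (hs1 : 1 ≤ s) (hs2 : s ≤ q - p) :
    Fm q p b s = amod (s + ((b + (q - p) - s) / (q - p)) * (q - p)) q := by
  unfold Fm; rw [if_neg (by omega), if_pos hs2]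

lemma Fm_b2 (q p b s : ℕ) (hs1 : q - p + 1 ≤ s) (hs2 : s ≤ q) :
    Fm q p b s = amod (s + ((b + p - (s - (q - p))) / p) * p) q := by
  unfold Fm; rw [if_neg (by omega), if_neg (by omega)]

lemma mod_bounds_false (q x y : ℕ) (h : x % q = y % q) (hxy : x < y) (hlt : y - x < q) :
    False := by
  have hd := (Nat.modEq_iff_dvd' hxy.le).mp h
  have := Nat.le_of_dvd (by omega) hd
  omega

lemma sigma_eq_F (p q : ℕ) (hp : 0 < p) (hpq : p < q) :
    ∀ b, b ≤ q → ∀ s, sigma q p b s = Fm q p b s := by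
  have hm : 0 < q - p := by omega
  intro b
  induction b with
  | zero =>
    intro _ s
    show (1 : Equiv.Perm ℕ) s = _
    rcases Nat.lt_or_ge q s with h | h
    · rw [Fm_out _ _ _ _ (Or.inr h)]; rfl
    rcases Nat.eq_zero_or_pos s with h0 | h0
    · rw [Fm_out _ _ _ _ (Or.inl h0)]; rfl
    rcases le_or_gt s (q - p) with hb1 | hb1
    · rw [Fm_b1 _ _ _ _ h0 hb1]
      have : (0 + (q - p) - s) / (q - p) = 0 := Nat.div_eq_of_lt (by omega)
      rw [this]
      simp [amod_eq_self s q h0 h]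
    · rw [Fm_b2 _ _ _ _ (by omega) h]
      have : (0 + p - (s - (q - p))) / p = 0 := Nat.div_eq_of_lt (by omega)
      rw [this]
      simp [amod_eq_self s q h0 h]
  | succ b IH =>
    intro hb s
    have hbq : b ≤ q := by omega
    have hstep : sigma q p (b+1) s = tau q p (b+1) (sigma q p b s) := rfl
    rw [hstep, IH hbq s]
    -- notation
    set m := q - p with hmdef
    have htau : tau q p (b+1) = Equiv.swap (b+1) (amod (b+1+m) q) := by
      unfold tau
      congr 2
      omega
    rw [htau]
    set t := amod (b+1+m) q with htdef
    have hq : 0 < q := by omega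
    have ht1 : 1 ≤ t := amod_pos _ _ hq
    have ht2 : t ≤ q := amod_le _ _ hq
    have hut : (b+1 : ℕ) ≠ t := by
      intro h
      have : amod (b+1) q = amod (b+1+m) q := by
        rw [amod_eq_self (b+1) q (by omega) (by omega)]; exact h
      rw [amod_eq_amod_iff _ _ _ hq] at this
      exact mod_bounds_false q (b+1) (b+1+m) this (by omega) (by omega)
    rcases Nat.lt_or_ge q s with h | h
    · rw [Fm_out _ _ _ _ (Or.inr h), Fm_out _ _ _ _ (Or.inr h)]
      exact Equiv.swap_apply_of_ne_of_ne (by omega) (by omega)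
    rcases Nat.eq_zero_or_pos s with h0 | h0
    · rw [Fm_out _ _ _ _ (Or.inl h0), Fm_out _ _ _ _ (Or.inl h0)]
      exact Equiv.swap_apply_of_ne_of_ne (by omega) (by omega)
    rcases le_or_gt s (q - p) with hb1 | hb1
    · -- block 1
      rw [Fm_b1 _ _ _ _ h0 hb1, Fm_b1 _ _ _ _ h0 hb1]
      set x := s + ((b + (q-p) - s)/(q-p)) * (q-p) with hx
      set x' := s + ((b + 1 + (q-p) - s)/(q-p)) * (q-p) with hx'
      have hwin := window b (q-p) s hm hb1 h0
      have hwin' := window (b+1) (q-p) s hm hb1 h0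
      rw [← hx] at hwin; rw [← hx'] at hwin'
      have hxm : x % (q-p) = s % (q-p) := by rw [hx]; simp [Nat.add_mul_mod_self_right]
      have hxm' : x' % (q-p) = s % (q-p) := by rw [hx']; simp [Nat.add_mul_mod_self_right]
      rcases eq_or_ne x (b+1) with hxe | hxe
      · -- affected
        have hFb : amod x q = b + 1 := by rw [hxe]; exact amod_eq_self _ _ (by omega) (by omega)
        rw [hFb, Equiv.swap_apply_left]
        have : x' = b + 1 + m := by
          apply window_unique (b+1) (q-p) x' (b+1+m) hm hwin'.1 hwin'.2 (by omega) (by omega)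
          rw [hxm']
          rw [← hxm, hxe]
          simp [hmdef, Nat.add_mod_right]
        rw [this]
      · -- unaffected
        have hxeq : x' = x :=
          window_unique (b+1) (q-p) x' x hm hwin'.1 hwin'.2 (by omega) (by omega)
            (by rw [hxm', hxm])
        rw [hxeq]
        apply Equiv.swap_apply_of_ne_of_ne
        · intro hc
          have : amod x q = amod (b+1) q := by
            rw [hc]; rw [amod_eq_self (b+1) q (by omega) (by omega)]
          rw [amod_eq_amod_iff _ _ _ hq] at this
          exact mod_bounds_false q (b+1) x this.symm (by omega) (by omega)
        · intro hc
          rw [htdef, amod_eq_amod_iff _ _ _ hq] at hc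
          exact mod_bounds_false q x (b+1+m) hc (by omega) (by omega)
    · -- block 2
      rw [Fm_b2 _ _ _ _ (by omega) h, Fm_b2 _ _ _ _ (by omega) h]
      set r := s - (q - p) with hr
      have hr1 : 1 ≤ r := by omega
      have hr2 : r ≤ p := by omega
      set y := r + ((b + p - r)/p) * p with hy
      set y' := r + ((b + 1 + p - r)/p) * p with hy'
      have hwin := window b p r hp hr2 hr1
      have hwin' := window (b+1) p r hp hr2 hr1
      rw [← hy] at hwin; rw [← hy'] at hwin'
      have hsy : s + ((b + p - (s - (q-p)))/p) * p = y + m := by rw [hy, ← hr]; omega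
      have hsy' : s + ((b + 1 + p - (s - (q-p)))/p) * p = y' + m := by rw [hy', ← hr]; omega
      rw [hsy, hsy']
      have hym : y % p = r % p := by rw [hy]; simp [Nat.add_mul_mod_self_right]
      have hym' : y' % p = r % p := by rw [hy']; simp [Nat.add_mul_mod_self_right]
      rcases eq_or_ne y (b+1) with hye | hye
      · -- affected
        have hFb : amod (y + m) q = t := by
          rw [htdef, amod_eq_amod_iff _ _ _ hq, hye]
        rw [hFb, Equiv.swap_apply_right]
        have hy'e : y' = b + 1 + p := by
          apply window_unique (b+1) p y' (b+1+p) hp hwin'.1 hwin'.2 (by omega) (by omega)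
          rw [hym', ← hym, hye]
          simp [Nat.add_mod_right]
        rw [hy'e]
        rw [show b + 1 + p + m = (b+1) + q by omega]
        have : amod ((b+1) + q) q = amod (b+1) q := by
          rw [amod_eq_amod_iff _ _ _ hq]
          simp [Nat.add_mod_right]
        rw [this, amod_eq_self (b+1) q (by omega) (by omega)]
      · -- unaffected
        have hyeq : y' = y :=
          window_unique (b+1) p y' y hp hwin'.1 hwin'.2 (by omega) (by omega)
            (by rw [hym', hym])
        rw [hyeq]
        apply Equiv.swap_apply_of_ne_of_ne
        · intro hc
          have : amod (y+m) q = amod (b+1) q := by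
            rw [hc]; rw [amod_eq_self (b+1) q (by omega) (by omega)]
          rw [amod_eq_amod_iff _ _ _ hq] at this
          exact mod_bounds_false q (b+1) (y+m) this.symm (by omega) (by omega)
        · intro hc
          rw [htdef, amod_eq_amod_iff _ _ _ hq] at hc
          exact mod_bounds_false q (b+1+m) (y+m) hc.symm (by omega) (by omega)




lemma keyB (π : Equiv.Perm ℕ) (c d lo : ℕ) (hc : 0 < c) (hcd : Nat.Coprime c d)
    (hstep : ∀ s, lo + 1 ≤ s → s ≤ lo + c →
      (lo + 1 ≤ π s ∧ π s ≤ lo + c ∧ (π s + d) % c = s % c))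
    (s : ℕ) (h1 : lo + 1 ≤ s) (h2 : s ≤ lo + c) :
    IsLeast {n : ℤ | 1 ≤ n ∧ (π ^ n) s = s} (c : ℤ) := by
  have iter : ∀ n : ℕ, lo + 1 ≤ (π ^ n) s ∧ (π ^ n) s ≤ lo + c ∧
      ((π ^ n) s + n * d) % c = s % c := by
    intro n
    induction n with
    | zero => simpa using ⟨h1, h2⟩
    | succ n IH =>
      have happ : (π ^ (n+1)) s = π ((π ^ n) s) := by
        rw [pow_succ']; rfl
      obtain ⟨ih1, ih2, ih3⟩ := IH
      obtain ⟨hs1, hs2, hs3⟩ := hstep _ ih1 ih2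
      refine ⟨by rw [happ]; exact hs1, by rw [happ]; exact hs2, ?_⟩
      rw [happ]
      have e1 : Nat.ModEq c (π ((π ^ n) s) + d) ((π ^ n) s) := hs3
      have e2 : Nat.ModEq c (π ((π ^ n) s) + d + n * d) ((π ^ n) s + n * d) :=
        e1.add_right _
      have e3 : Nat.ModEq c ((π ^ n) s + n * d) s := ih3
      have := e2.trans e3
      have harith : π ((π ^ n) s) + d + n * d = π ((π ^ n) s) + (n+1) * d := by ring
      rw [harith] at this
      exact this
  constructor
  · constructor
    · exact_mod_cast hc
    · have h := iter c
      have hmod : ((π ^ c) s + c * d) % c = (π ^ c) s % c := by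
        simp [Nat.add_mul_mod_self_left]
      have : (π ^ c) s % c = s % c := by rw [← hmod]; exact h.2.2
      have heq : (π ^ c) s = s :=
        window_unique lo c _ s hc (by omega) h.2.1 (by omega) h2 this
      rw [show ((c : ℤ)) = ((c : ℕ) : ℤ) from rfl, zpow_natCast]
      exact heq
  · rintro n ⟨hn1, hn2⟩
    set N := n.toNat with hN
    have hn0 : (N : ℤ) = n := Int.toNat_of_nonneg (by omega)
    have hNe : (π ^ N) s = s := by
      rw [← hn0, zpow_natCast] at hn2; exact hn2
    have h := iter N
    rw [hNe] at h
    have : Nat.ModEq c (s + N * d) s := h.2.2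
    have hdvd : c ∣ N * d := by
      have := (Nat.modEq_iff_dvd' (by omega : s ≤ s + N * d)).mp this.symm
      simpa using this
    have hcN : c ∣ N := hcd.dvd_of_dvd_mul_right hdvd
    have hN1 : 1 ≤ N := by omega
    have := Nat.le_of_dvd (by omega) hcN
    omega

lemma Fq_b1 (p q : ℕ) (hp : 0 < p) (hpq : p < q) (s : ℕ) (h0 : 1 ≤ s) (h1 : s ≤ q - p) :
    1 ≤ Fm q p q s ∧ Fm q p q s ≤ q - p ∧ (Fm q p q s + q) % (q - p) = s % (q - p) := by
  have hm : 0 < q - p := by omega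
  rw [Fm_b1 _ _ _ _ h0 h1]
  set x := s + ((q + (q-p) - s)/(q-p)) * (q-p) with hx
  have hwin := window q (q-p) s hm h1 h0
  rw [← hx] at hwin
  have hxm : x % (q-p) = s % (q-p) := by rw [hx]; simp [Nat.add_mul_mod_self_right]
  have hxq : x % q = x - q := by
    rw [Nat.mod_eq_sub_mod (by omega), Nat.mod_eq_of_lt (by omega)]
  have hamod : amod x q = x - q := by
    unfold amod; rw [hxq, if_neg (by omega)]
  rw [hamod]
  refine ⟨by omega, by omega, ?_⟩
  rw [show x - q + q = x by omega, hxm]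

lemma Fq_b2 (p q : ℕ) (hp : 0 < p) (hpq : p < q) (s : ℕ) (h0 : q - p + 1 ≤ s) (h1 : s ≤ q) :
    q - p + 1 ≤ Fm q p q s ∧ Fm q p q s ≤ q ∧ (Fm q p q s + q) % p = s % p := by
  have hm : 0 < q - p := by omega
  rw [Fm_b2 _ _ _ _ h0 h1]
  set r := s - (q - p) with hr
  have hr1 : 1 ≤ r := by omega
  have hr2 : r ≤ p := by omega
  set y := r + ((q + p - r)/p) * p with hy
  have hwin := window q p r hp hr2 hr1
  rw [← hy] at hwin
  have hym : y % p = r % p := by rw [hy]; simp [Nat.add_mul_mod_self_right]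
  have hsy : s + ((q + p - (s - (q-p)))/p) * p = y + (q - p) := by rw [hy, ← hr]; omega
  rw [hsy]
  have hamod : amod (y + (q - p)) q = y + (q - p) - q := by
    rcases eq_or_ne (y + (q - p)) (2*q) with h2q | h2q
    · unfold amod
      rw [h2q, show 2*q = q + q by ring, Nat.add_mod_left, Nat.mod_self, if_pos rfl]
      omega
    · have hlt : y + (q - p) - q < q := by omega
      have hyq : (y + (q - p)) % q = y + (q - p) - q := by
        rw [Nat.mod_eq_sub_mod (by omega), Nat.mod_eq_of_lt hlt]
      unfold amod; rw [hyq, if_neg (by omega)]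
  rw [hamod]
  refine ⟨by omega, by omega, ?_⟩
  have : y + (q - p) - q + q = y + (q - p) := by omega
  rw [this]
  have : (y + (q - p)) % p = (r + (q - p)) % p := by
    conv_lhs => rw [Nat.add_mod, hym, ← Nat.add_mod]
  rw [this, show r + (q - p) = s by omega]

lemma coprime_q_m (p q : ℕ) (hcop : Nat.Coprime p q) (hpq : p < q) :
    Nat.Coprime (q - p) q := by
  have h : (q - p).gcd q ∣ p := by
    have h1 : (q - p).gcd q ∣ q - p := Nat.gcd_dvd_left _ _
    have h2 : (q - p).gcd q ∣ q := Nat.gcd_dvd_right _ _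
    have := Nat.dvd_sub h2 h1
    simpa [Nat.sub_sub_self hpq.le] using this
  have : (q - p).gcd q ∣ p.gcd q := Nat.dvd_gcd h (Nat.gcd_dvd_right _ _)
  rw [hcop] at this
  exact Nat.dvd_one.mp this




lemma zmod_val_natCast_self (n : ℕ) [NeZero n] (z : ZMod n) : ((z.val : ℕ) : ZMod n) = z := by
  simp [ZMod.natCast_val, ZMod.cast_id]

lemma zmod_val_neg_one (n : ℕ) [NeZero n] : (-1 : ZMod n).val = n - 1 := by
  have h1 : ((n - 1 : ℕ) : ZMod n) = -1 := by
    have hn : 1 ≤ n := Nat.one_le_iff_ne_zero.mpr (NeZero.ne n)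
    have : ((n - 1 : ℕ) : ZMod n) + 1 = 0 := by
      rw [show ((1 : ZMod n)) = ((1 : ℕ) : ZMod n) by push_cast; ring]
      rw [← Nat.cast_add, show n - 1 + 1 = n by omega]
      exact ZMod.natCast_self n
    linear_combination this
  rw [← h1, ZMod.val_cast_of_lt (by have := NeZero.ne n; omega)]

lemma zmod_val_sub_one (n : ℕ) [NeZero n] (z : ZMod n) (hz : z ≠ 0) :
    (z - 1).val = z.val - 1 := by
  have hv : 0 < z.val := by
    rcases Nat.eq_zero_or_pos z.val with h | h
    · exfalso; apply hz
      have := zmod_val_natCast_self n z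
      rw [h] at this; simpa using this.symm
    · exact h
  have hlt : z.val < n := ZMod.val_lt z
  have h1 : ((z.val - 1 : ℕ) : ZMod n) = z - 1 := by
    have : ((z.val - 1 : ℕ) : ZMod n) = ((z.val : ℕ) : ZMod n) - 1 := by
      rw [Nat.cast_sub hv]; push_cast; ring
    rw [this, zmod_val_natCast_self]
  rw [← h1, ZMod.val_cast_of_lt (by omega)]

lemma zmod_cancel_q (n q : ℕ) [NeZero n] (hq : Nat.Coprime q n) (a b : ZMod n)
    (h : a * (q : ZMod n) = b * (q : ZMod n)) : a = b := by
  have hu : ((ZMod.unitOfCoprime q hq : (ZMod n)ˣ) : ZMod n) = (q : ZMod n) :=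
    ZMod.coe_unitOfCoprime q hq
  rw [← hu] at h
  exact Units.mul_left_inj _ |>.mp h



/-- Parametrization of the q-cycle of sigma q p (q-1). -/
def Hmap (q p i : ℕ) : ℕ :=
  if i % q < p then (q - p) + 1 + (-1 - ((i % q : ℕ) : ZMod p) * (q : ZMod p)).val
  else 1 + (-1 - ((i % q - p : ℕ) : ZMod (q - p)) * (q : ZMod (q - p))).val


lemma Hmap_of_lt (q p i : ℕ) (h : i % q < p) :
    Hmap q p i = (q - p) + 1 + (-1 - ((i % q : ℕ) : ZMod p) * (q : ZMod p)).val := by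
  unfold Hmap; rw [if_pos h]

lemma Hmap_of_ge (q p i : ℕ) (h : ¬ i % q < p) :
    Hmap q p i = 1 + (-1 - ((i % q - p : ℕ) : ZMod (q - p)) * (q : ZMod (q - p))).val := by
  unfold Hmap; rw [if_neg h]

lemma H_step (p q : ℕ) (hcop : Nat.Coprime p q) (hp : 0 < p) (hpq : p < q) (i : ℕ) :
    Fm q p (q - 1) (Hmap q p i) = Hmap q p (i + 1) := by
  haveI : NeZero p := ⟨by omega⟩
  haveI : NeZero (q - p) := ⟨by omega⟩
  have hm : 0 < q - p := by omega
  have hq : 0 < q := by omega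
  have hi' : i % q < q := Nat.mod_lt i hq
  have hmod1 : (i + 1) % q = (i % q + 1) % q := by
    conv_lhs => rw [Nat.add_mod, Nat.mod_eq_of_lt (show 1 < q by omega)]
  by_cases hA : i % q < p
  · -- block 2 point
    set e : ZMod p := -1 - ((i % q : ℕ) : ZMod p) * (q : ZMod p) with he
    have hs : Hmap q p i = (q - p) + 1 + e.val := Hmap_of_lt q p i hA
    have hev : e.val < p := ZMod.val_lt e
    set s := (q - p) + 1 + e.val with hsdef
    have hs1 : q - p + 1 ≤ s := by omega
    have hs2 : s ≤ q := by omega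
    rw [hs, Fm_b2 _ _ _ _ hs1 hs2]
    set r := s - (q - p) with hr
    have hrr : r = 1 + e.val := by omega
    set y := r + ((q - 1 + p - r)/p) * p with hy
    have hwin := window (q-1) p r hp (by omega) (by omega)
    rw [← hy] at hwin
    set z : ZMod p := e + 1 - (q : ZMod p) with hz
    set w := z.val with hw
    have hwlt : w < p := ZMod.val_lt z
    have hyqw : y = q + w := by
      apply window_unique (q-1) p y (q+w) hp hwin.1 hwin.2 (by omega) (by omega)
      have h1 : y % p = r % p := by rw [hy]; simp [Nat.add_mul_mod_self_right]
      have h2 : (q + w) % p = r % p := by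
        have : ((q + w : ℕ) : ZMod p) = ((r : ℕ) : ZMod p) := by
          rw [hrr, hw]; push_cast [zmod_val_natCast_self]
          rw [hz]; ring
        exact (ZMod.natCast_eq_natCast_iff _ _ _).mp this
      rw [h1, h2]
    have hsy : s + ((q - 1 + p - (s - (q - p)))/p) * p = y + (q - p) := by
      rw [hy, ← hr]; omega
    rw [hsy, hyqw]
    have hamod : amod (q + w + (q - p)) q = (q - p) + w := by
      have h1 : (q + w + (q - p)) % q = (q - p) + w := by
        rw [show q + w + (q - p) = q + (w + (q - p)) by ring, Nat.add_mod_left,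
          Nat.mod_eq_of_lt (by omega)]
        omega
      unfold amod; rw [h1, if_neg (by omega)]
    rw [hamod]
    -- now compute Hmap q p (i+1)
    have hzz : z = -(((i % q + 1 : ℕ) : ZMod p)) * (q : ZMod p) := by
      rw [hz, he]; push_cast; ring
    by_cases hz0 : z = 0
    · -- i % q = p - 1, next index is p
      have hdvd : p ∣ (i % q + 1) * q := by
        rw [← ZMod.natCast_eq_zero_iff]
        push_cast
        have : -(((i % q + 1 : ℕ) : ZMod p)) * (q : ZMod p) = 0 := by rw [← hzz]; exact hz0
        push_cast at this
        linear_combination -this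
      have hdvd2 : p ∣ (i % q + 1) := hcop.dvd_of_dvd_mul_right hdvd
      have hip : i % q + 1 = p := by
        have := Nat.le_of_dvd (by omega) hdvd2
        omega
      have hw0 : w = 0 := by rw [hw, hz0]; exact ZMod.val_zero
      have hmod2 : (i + 1) % q = p := by
        rw [hmod1, hip, Nat.mod_eq_of_lt hpq]
      rw [Hmap_of_ge q p (i+1) (by omega)]
      rw [hmod2]
      simp only [Nat.sub_self, Nat.cast_zero, zero_mul, sub_zero]
      rw [zmod_val_neg_one]
      omega
    · -- next index is i % q + 1 < p
      have hwpos : 0 < w := by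
        rcases Nat.eq_zero_or_pos w with h | h
        · exfalso; apply hz0
          have := zmod_val_natCast_self p z
          rw [← hw, h] at this; simpa using this.symm
        · exact h
      have hlt : i % q + 1 < p := by
        rcases eq_or_ne (i % q + 1) p with h | h
        · exfalso; apply hz0
          rw [hzz, h]
          simp
        · omega
      have hmod2 : (i + 1) % q = i % q + 1 := by
        rw [hmod1, Nat.mod_eq_of_lt (by omega)]
      rw [Hmap_of_lt q p (i+1) (by omega)]
      rw [hmod2]
      have hzm1 : -1 - ((i % q + 1 : ℕ) : ZMod p) * (q : ZMod p) = z - 1 := by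
        rw [hzz]; push_cast; ring
      rw [hzm1, zmod_val_sub_one p z hz0, ← hw]
      omega
  · -- block 1 point
    set e : ZMod (q - p) := -1 - ((i % q - p : ℕ) : ZMod (q - p)) * (q : ZMod (q - p)) with he
    have hs : Hmap q p i = 1 + e.val := Hmap_of_ge q p i hA
    have hev : e.val < q - p := ZMod.val_lt e
    set s := 1 + e.val with hsdef
    have hs1 : 1 ≤ s := by omega
    have hs2 : s ≤ q - p := by omega
    rw [hs, Fm_b1 _ _ _ _ hs1 hs2]
    set x := s + ((q - 1 + (q - p) - s)/(q - p)) * (q - p) with hx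
    have hwin := window (q-1) (q-p) s hm hs2 hs1
    rw [← hx] at hwin
    set z : ZMod (q - p) := e + 1 - (q : ZMod (q - p)) with hz
    set w := z.val with hw
    have hwlt : w < q - p := ZMod.val_lt z
    have hxqw : x = q + w := by
      apply window_unique (q-1) (q-p) x (q+w) hm hwin.1 hwin.2 (by omega) (by omega)
      have h1 : x % (q-p) = s % (q-p) := by rw [hx]; simp [Nat.add_mul_mod_self_right]
      have h2 : (q + w) % (q-p) = s % (q-p) := by
        have : ((q + w : ℕ) : ZMod (q-p)) = ((s : ℕ) : ZMod (q-p)) := by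
          rw [hsdef, hw]; push_cast [zmod_val_natCast_self]
          rw [hz]; ring
        exact (ZMod.natCast_eq_natCast_iff _ _ _).mp this
      rw [h1, h2]
    rw [hxqw]
    have hzz : z = -(((i % q - p + 1 : ℕ) : ZMod (q-p))) * (q : ZMod (q-p)) := by
      rw [hz, he]; push_cast; ring
    by_cases hz0 : z = 0
    · -- i % q = q - 1, next index is 0
      have hw0 : w = 0 := by rw [hw, hz0]; exact ZMod.val_zero
      have hamod : amod (q + w) q = q := by
        rw [hw0]
        unfold amod
        simp [Nat.mod_self]
      rw [hamod]
      have hdvd : (q - p) ∣ (i % q - p + 1) * q := by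
        rw [← ZMod.natCast_eq_zero_iff]
        push_cast
        have : -(((i % q - p + 1 : ℕ) : ZMod (q-p))) * (q : ZMod (q-p)) = 0 := by
          rw [← hzz]; exact hz0
        push_cast at this
        linear_combination -this
      have hdvd2 : (q - p) ∣ (i % q - p + 1) :=
        (coprime_q_m p q hcop hpq).dvd_of_dvd_mul_right hdvd
      have hiq : i % q = q - 1 := by
        have := Nat.le_of_dvd (by omega) hdvd2
        omega
      have hmod2 : (i + 1) % q = 0 := by
        rw [hmod1, hiq, show q - 1 + 1 = q by omega, Nat.mod_self]
      rw [Hmap_of_lt q p (i+1) (by omega)]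
      rw [hmod2]
      simp only [Nat.cast_zero, zero_mul, sub_zero]
      rw [zmod_val_neg_one]
      omega
    · -- next index is i % q + 1 ∈ [p+1, q-1]
      have hwpos : 0 < w := by
        rcases Nat.eq_zero_or_pos w with h | h
        · exfalso; apply hz0
          have := zmod_val_natCast_self (q-p) z
          rw [← hw, h] at this; simpa using this.symm
        · exact h
      have hamod : amod (q + w) q = w := by
        have h1 : (q + w) % q = w := by
          rw [Nat.add_mod_left, Nat.mod_eq_of_lt (by omega)]
        unfold amod; rw [h1, if_neg (by omega)]
      rw [hamod]
      have hlt : i % q + 1 < q := by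
        rcases eq_or_ne (i % q) (q - 1) with h | h
        · exfalso; apply hz0
          rw [hzz, show i % q - p + 1 = q - p by omega]
          simp
        · omega
      have hmod2 : (i + 1) % q = i % q + 1 := by
        rw [hmod1, Nat.mod_eq_of_lt hlt]
      rw [Hmap_of_ge q p (i+1) (by omega)]
      rw [hmod2]
      have hzm1 : -1 - ((i % q + 1 - p : ℕ) : ZMod (q-p)) * (q : ZMod (q-p)) = z - 1 := by
        rw [hzz, show i % q + 1 - p = i % q - p + 1 by omega]
        push_cast; ring
      rw [hzm1, zmod_val_sub_one (q-p) z hz0, ← hw]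
      omega




lemma Hmap_bounds (p q i : ℕ) (hp : 0 < p) (hpq : p < q) :
    1 ≤ Hmap q p i ∧ Hmap q p i ≤ q := by
  haveI : NeZero p := ⟨by omega⟩
  haveI : NeZero (q - p) := ⟨by omega⟩
  by_cases h : i % q < p
  · rw [Hmap_of_lt q p i h]
    have := ZMod.val_lt (-1 - ((i % q : ℕ) : ZMod p) * (q : ZMod p))
    omega
  · rw [Hmap_of_ge q p i h]
    have := ZMod.val_lt (-1 - ((i % q - p : ℕ) : ZMod (q - p)) * (q : ZMod (q - p)))
    omega

lemma Hmap_inj (p q : ℕ) (hcop : Nat.Coprime p q) (hp : 0 < p) (hpq : p < q)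
    (a b : ℕ) (ha : a < q) (hb : b < q) (h : Hmap q p a = Hmap q p b) : a = b := by
  haveI : NeZero p := ⟨by omega⟩
  haveI : NeZero (q - p) := ⟨by omega⟩
  have hma : a % q = a := Nat.mod_eq_of_lt ha
  have hmb : b % q = b := Nat.mod_eq_of_lt hb
  by_cases h1 : a % q < p <;> by_cases h2 : b % q < p
  · rw [Hmap_of_lt q p a h1, Hmap_of_lt q p b h2] at h
    have hval : (-1 - ((a % q : ℕ) : ZMod p) * (q : ZMod p)).val
        = (-1 - ((b % q : ℕ) : ZMod p) * (q : ZMod p)).val := by omega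
    have heq : (-1 - ((a % q : ℕ) : ZMod p) * (q : ZMod p))
        = (-1 - ((b % q : ℕ) : ZMod p) * (q : ZMod p)) := by
      rw [← zmod_val_natCast_self p (-1 - ((a % q : ℕ) : ZMod p) * (q : ZMod p)), hval,
        zmod_val_natCast_self]
    have hmul : ((a % q : ℕ) : ZMod p) * (q : ZMod p)
        = ((b % q : ℕ) : ZMod p) * (q : ZMod p) := by linear_combination -heq
    have := zmod_cancel_q p q hcop.symm _ _ hmul
    rw [hma, hmb] at this
    have hva := ZMod.val_cast_of_lt (show a < p by omega)
    have hvb := ZMod.val_cast_of_lt (show b < p by omega)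
    rw [this] at hva
    omega
  · exfalso
    rw [Hmap_of_lt q p a h1, Hmap_of_ge q p b h2] at h
    have hv1 := ZMod.val_lt (-1 - ((a % q : ℕ) : ZMod p) * (q : ZMod p))
    have hv2 := ZMod.val_lt (-1 - ((b % q - p : ℕ) : ZMod (q - p)) * (q : ZMod (q - p)))
    omega
  · exfalso
    rw [Hmap_of_ge q p a h1, Hmap_of_lt q p b h2] at h
    have hv1 := ZMod.val_lt (-1 - ((b % q : ℕ) : ZMod p) * (q : ZMod p))
    have hv2 := ZMod.val_lt (-1 - ((a % q - p : ℕ) : ZMod (q - p)) * (q : ZMod (q - p)))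
    omega
  · rw [Hmap_of_ge q p a h1, Hmap_of_ge q p b h2] at h
    have hval : (-1 - ((a % q - p : ℕ) : ZMod (q-p)) * (q : ZMod (q-p))).val
        = (-1 - ((b % q - p : ℕ) : ZMod (q-p)) * (q : ZMod (q-p))).val := by omega
    have heq : (-1 - ((a % q - p : ℕ) : ZMod (q-p)) * (q : ZMod (q-p)))
        = (-1 - ((b % q - p : ℕ) : ZMod (q-p)) * (q : ZMod (q-p))) := by
      rw [← zmod_val_natCast_self (q-p) (-1 - ((a % q - p : ℕ) : ZMod (q-p)) * (q : ZMod (q-p))),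
        hval, zmod_val_natCast_self]
    have hmul : ((a % q - p : ℕ) : ZMod (q-p)) * (q : ZMod (q-p))
        = ((b % q - p : ℕ) : ZMod (q-p)) * (q : ZMod (q-p)) := by linear_combination -heq
    have := zmod_cancel_q (q-p) q (coprime_q_m p q hcop hpq).symm _ _ hmul
    rw [hma, hmb] at this
    have hva := ZMod.val_cast_of_lt (show a - p < q - p by omega)
    have hvb := ZMod.val_cast_of_lt (show b - p < q - p by omega)
    rw [this] at hva
    omega

lemma Hmap_cover (p q : ℕ) (hcop : Nat.Coprime p q) (hp : 0 < p) (hpq : p < q)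
    (s : ℕ) (h0 : 1 ≤ s) (h1 : s ≤ q) : ∃ i, i < q ∧ Hmap q p i = s := by
  have hq : 0 < q := by omega
  let f : Fin q → Fin q := fun i =>
    ⟨Hmap q p i - 1, by have := Hmap_bounds p q i hp hpq; omega⟩
  have hfinj : Function.Injective f := by
    intro a b hab
    have h1 := Hmap_bounds p q (a : ℕ) hp hpq
    have h2 := Hmap_bounds p q (b : ℕ) hp hpq
    have : Hmap q p (a : ℕ) - 1 = Hmap q p (b : ℕ) - 1 := congrArg Fin.val hab
    have heq : Hmap q p (a : ℕ) = Hmap q p (b : ℕ) := by omega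
    exact Fin.ext (Hmap_inj p q hcop hp hpq _ _ a.isLt b.isLt heq)
  have hfsurj : Function.Surjective f := Finite.surjective_of_injective hfinj
  obtain ⟨i, hi⟩ := hfsurj ⟨s - 1, by omega⟩
  refine ⟨(i : ℕ), i.isLt, ?_⟩
  have := congrArg Fin.val hi
  have hb := Hmap_bounds p q (i : ℕ) hp hpq
  simp only [f] at this
  omega

lemma pow_H (π : Equiv.Perm ℕ) (H : ℕ → ℕ) (hstep : ∀ i, π (H i) = H (i + 1)) :
    ∀ n i, (π ^ n) (H i) = H (i + n) := by
  intro n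
  induction n with
  | zero => intro i; simp
  | succ n IH =>
    intro i
    have happ : (π ^ (n+1)) (H i) = π ((π ^ n) (H i)) := by rw [pow_succ']; rfl
    rw [happ, IH i, hstep, ← Nat.add_assoc]

lemma Hmap_mod (q p i : ℕ) : Hmap q p i = Hmap q p (i % q) := by
  unfold Hmap
  rw [Nat.mod_mod_of_dvd _ (dvd_refl q)]

lemma keyC (π : Equiv.Perm ℕ) (H : ℕ → ℕ) (q : ℕ) (hq : 0 < q)
    (hstep : ∀ i, π (H i) = H (i + 1))
    (hper : ∀ i, H i = H (i % q))
    (hinj : ∀ a b, a < q → b < q → H a = H b → a = b)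
    (i0 : ℕ) (hi0 : i0 < q) :
    IsLeast {n : ℤ | 1 ≤ n ∧ (π ^ n) (H i0) = H i0} (q : ℤ) := by
  constructor
  · refine ⟨by exact_mod_cast hq, ?_⟩
    rw [show ((q : ℤ)) = ((q : ℕ) : ℤ) from rfl, zpow_natCast]
    rw [pow_H π H hstep q i0, hper (i0 + q)]
    rw [Nat.add_mod_right, Nat.mod_eq_of_lt hi0]
  · rintro n ⟨hn1, hn2⟩
    set N := n.toNat with hN
    have hn0 : (N : ℤ) = n := Int.toNat_of_nonneg (by omega)
    have hNe : (π ^ N) (H i0) = H i0 := by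
      rw [← hn0, zpow_natCast] at hn2; exact hn2
    rw [pow_H π H hstep N i0, hper (i0 + N)] at hNe
    have hmlt : (i0 + N) % q < q := Nat.mod_lt _ hq
    have heq : (i0 + N) % q = i0 := hinj _ _ hmlt hi0 hNe
    have hdvd : q ∣ N := by
      have h1 : (i0 + N) % q = i0 % q := by rw [heq, Nat.mod_eq_of_lt hi0]
      have h2 := (Nat.modEq_iff_dvd' (show i0 ≤ i0 + N by omega)).mp h1.symm
      simpa using h2
    have hN1 : 1 ≤ N := by omega
    have := Nat.le_of_dvd (by omega) hdvd
    omega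



/-- (i) σ_{q-1} is a single q-cycle: every s in {1,…,q} has period q.
(ii) under σ_q, s has period q - p if 1 ≤ s ≤ q - p and period p if
q - p + 1 ≤ s ≤ q. -/
theorem period_extreme_cases (p q : ℕ) (hcop : Nat.Coprime p q) (hp : 0 < p)
    (hpq : p < q) :
    (∀ s : ℕ, 1 ≤ s → s ≤ q →
      IsLeast {n : ℤ | 1 ≤ n ∧ ((sigma q p (q - 1)) ^ n) s = s} (q : ℤ)) ∧
    (∀ s : ℕ, 1 ≤ s → s ≤ q - p →
      IsLeast {n : ℤ | 1 ≤ n ∧ ((sigma q p q) ^ n) s = s} ((q - p : ℕ) : ℤ)) ∧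
    (∀ s : ℕ, q - p + 1 ≤ s → s ≤ q →
      IsLeast {n : ℤ | 1 ≤ n ∧ ((sigma q p q) ^ n) s = s} (p : ℤ)) := by
  have hm : 0 < q - p := by omega
  have hsigq : ∀ s, sigma q p q s = Fm q p q s := sigma_eq_F p q hp hpq q le_rfl
  refine ⟨?_, ?_, ?_⟩
  · -- part (i)
    intro s h0 h1
    obtain ⟨i0, hi0, hHi0⟩ := Hmap_cover p q hcop hp hpq s h0 h1
    rw [← hHi0]
    apply keyC (sigma q p (q-1)) (Hmap q p) q (by omega)
    · intro i
      rw [sigma_eq_F p q hp hpq (q-1) (by omega)]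
      exact H_step p q hcop hp hpq i
    · exact fun i => Hmap_mod q p i
    · exact fun a b ha hb => Hmap_inj p q hcop hp hpq a b ha hb
    · exact hi0
  · -- part (ii), block 1
    intro s h0 h1
    apply keyB (sigma q p q) (q - p) q 0 hm (coprime_q_m p q hcop hpq)
      _ s (by omega) (by omega)
    intro x hx1 hx2
    rw [hsigq x]
    have := Fq_b1 p q hp hpq x (by omega) (by omega)
    exact ⟨by omega, by omega, this.2.2⟩
  · -- part (ii), block 2
    intro s h0 h1
    apply keyB (sigma q p q) p q (q - p) hp hcop _ s (by omega) (by omega)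
    intro x hx1 hx2
    rw [hsigq x]
    have := Fq_b2 p q hp hpq x (by omega) (by omega)
    exact ⟨by omega, by omega, this.2.2⟩
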